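/- Let d be a positive integer and let g : ℂ² → ℂ² be a map satisfying g(G(u,v)) = G(T_d(u), T_d(v)) for all u, v ∈ ℂ. Then (1) for every z ∈ ℂ, g((1+z)², (1+z)³) = ((1+T_d(z))², (1+T_d(z))³); and (2) g maps the cuspidal cubic C_C = {(p,q) ∈ ℂ² : p³ = q²} onto itself: g(C_C) = C_C. -/

import Mathlib

/-- The polynomial parametrization of ℂ²/D₃ ≅ ℂ². -/
noncomputable def G (u v : ℂ) : ℂ × ℂ :=
  (1 + u * v + v ^ 2, (-2 + u ^ 2 + 6 * v ^ 2 + u * v * (3 + v ^ 2)) / 2)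

lemma G_two (w : ℂ) : G 2 w = ((1 + w) ^ 2, (1 + w) ^ 3) := by
  unfold G
  refine Prod.ext ?_ ?_ <;> simp <;> ring

/-- For `g : ℂ² → ℂ²` satisfying `g(G(u,v)) = G(T_d(u), T_d(v))`:
(1) `g((1+z)², (1+z)³) = ((1+T_d(z))², (1+T_d(z))³)` for all `z ∈ ℂ`;
(2) `g` maps the cuspidal cubic `C_C = {p³ = q²}` onto itself. -/
theorem g_maps_cuspidal_cubic_onto_itself (d : ℕ) (hd : 0 < d) (T : Polynomial ℤ)
    (hT : ∀ s : ℂ, s ≠ 0 → Polynomial.aeval (s + s⁻¹) T = s ^ (d : ℤ) + s ^ (-(d : ℤ)))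
    (g : ℂ × ℂ → ℂ × ℂ)
    (hg : ∀ u v : ℂ, g (G u v) = G (Polynomial.aeval u T) (Polynomial.aeval v T)) :
    (∀ z : ℂ, g ((1 + z) ^ 2, (1 + z) ^ 3)
        = ((1 + Polynomial.aeval z T) ^ 2, (1 + Polynomial.aeval z T) ^ 3)) ∧
      g '' {pq : ℂ × ℂ | pq.1 ^ 3 = pq.2 ^ 2} = {pq : ℂ × ℂ | pq.1 ^ 3 = pq.2 ^ 2} := by
  -- T(2) = 2
  have hT2 : Polynomial.aeval (2 : ℂ) T = 2 := by
    have h := hT 1 one_ne_zero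
    norm_num at h
    exact h
  -- part (1)
  have key : ∀ z : ℂ, g ((1 + z) ^ 2, (1 + z) ^ 3)
      = ((1 + Polynomial.aeval z T) ^ 2, (1 + Polynomial.aeval z T) ^ 3) := by
    intro z
    have h := hg 2 z
    rw [G_two, hT2, G_two] at h
    exact h
  have key' : ∀ t : ℂ, g (t ^ 2, t ^ 3)
      = ((1 + Polynomial.aeval (t - 1) T) ^ 2, (1 + Polynomial.aeval (t - 1) T) ^ 3) := by
    intro t
    have h := key (t - 1)
    rw [show (1 : ℂ) + (t - 1) = t by ring] at h
    exact h
  -- surjectivity of z ↦ aeval z T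
  have hsurj : ∀ c : ℂ, ∃ z : ℂ, Polynomial.aeval z T = c := by
    intro c
    obtain ⟨y, hy⟩ := Complex.exists_root
      (f := Polynomial.X ^ 2 - Polynomial.C c * Polynomial.X + 1) (by
        have h2 : (Polynomial.X ^ 2 - Polynomial.C c * Polynomial.X + 1 : Polynomial ℂ).degree = 2 := by
          compute_degree!
        rw [h2]; norm_num)
    have hy' : y ^ 2 - c * y + 1 = 0 := by
      simpa [Polynomial.IsRoot] using hy
    have hy0 : y ≠ 0 := by
      rintro rfl
      norm_num at hy'
    obtain ⟨s, hs⟩ := Complex.exists_root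
      (f := Polynomial.X ^ d - Polynomial.C y) (by rw [Polynomial.degree_X_pow_sub_C hd]; exact_mod_cast hd)
    have hs' : s ^ d = y := by
      have := hy0
      simpa [Polynomial.IsRoot, sub_eq_zero] using hs
    have hs0 : s ≠ 0 := by
      rintro rfl
      exact hy0 (by simpa [zero_pow hd.ne'] using hs'.symm)
    refine ⟨s + s⁻¹, ?_⟩
    rw [hT s hs0, zpow_neg, zpow_natCast, hs']
    field_simp
    linear_combination hy'
  refine ⟨key, ?_⟩
  -- cusp parametrization
  have cusp : ∀ p q : ℂ, p ^ 3 = q ^ 2 → ∃ t : ℂ, p = t ^ 2 ∧ q = t ^ 3 := by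
    intro p q h
    by_cases hp : p = 0
    · refine ⟨0, by simp [hp], ?_⟩
      have hq : q ^ 2 = 0 := by rw [← h, hp]; ring
      have : q = 0 := by
        exact pow_eq_zero_iff (by norm_num) |>.mp hq
      simp [this]
    · have hq : q ≠ 0 := by
        rintro rfl
        exact hp (pow_eq_zero_iff (n := 3) (by norm_num) |>.mp (by simpa using h))
      refine ⟨q / p, ?_, ?_⟩
      · field_simp
        linear_combination h
      · field_simp
        linear_combination h
  ext ⟨p, q⟩
  simp only [Set.mem_image, Set.mem_setOf_eq]
  constructor
  · rintro ⟨⟨a, b⟩, hab, hgab⟩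
    obtain ⟨t, rfl, rfl⟩ := cusp a b hab
    rw [key' t] at hgab
    rw [Prod.mk.injEq] at hgab
    obtain ⟨h1, h2⟩ := hgab
    rw [← h1, ← h2]
    ring
  · intro hpq
    obtain ⟨t, rfl, rfl⟩ := cusp p q hpq
    obtain ⟨z, hz⟩ := hsurj (t - 1)
    refine ⟨((1 + z) ^ 2, (1 + z) ^ 3), by simp; ring, ?_⟩
    rw [key z, hz]
    rw [show (1 : ℂ) + (t - 1) = t by ring]
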